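/- arXiv:2404.16377 — 4 statements merged into one kernel-verified Lean document; each statement's English description precedes it below -/
import Mathlib

section
/- Let γ > 1 and B, S > 0 be real constants, 𝔱(ρ) := 2ρ²(B − ρ^{γ−1}S), ϱ_c := (2B/((γ+1)S))^{1/(γ−1)}, ϱ_m := (B/S)^{1/(γ−1)}, 𝔱_c := (γ−1)(2B/(γ+1))^{(γ+1)/(γ−1)} S^{−2/(γ−1)}, and let ρ̂ : [0, 𝔱_c] → [ϱ_c, ϱ_m] be the inverse of 𝔱 on [ϱ_c, ϱ_m], with g(t) := 1/ρ̂(t). Then: (i) 𝔱'(ρ) = (2/ρ)(𝔱(ρ) − (γ−1)ρ^{γ+1}S) for every ρ > 0; (ii) for every ε ∈ (0, 1) and every ρ ∈ [ϱ_c, ϱ_m] with 𝔱(ρ) ≤ (1 − ε/2)𝔱_c, one has 𝔱'(ρ) ≤ −ε𝔱_c/ρ; (iii) consequently, for every t ∈ [0, (1 − ε/2)𝔱_c], 0 < g'(t) ≤ g(t)/(ε𝔱_c). -/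
set_option maxHeartbeats 2000000 in
/-- Quantitative ellipticity bound (2.49): with
`𝔱(ρ) = 2ρ²(B − ρ^{γ−1}S)`, its inverse `ρ̂` on `[ϱ_c, ϱ_m]` and `g = 1/ρ̂`:
(i) `𝔱'(ρ) = (2/ρ)(𝔱(ρ) − (γ−1)ρ^{γ+1}S)` for `ρ > 0`;
(ii) for `ε ∈ (0,1)` and `ρ ∈ [ϱ_c, ϱ_m]` with `𝔱(ρ) ≤ (1 − ε/2)𝔱_c`,
`𝔱'(ρ) ≤ −ε𝔱_c/ρ`; (iii) hence `0 < g'(t) ≤ g(t)/(ε𝔱_c)` on `[0, (1 − ε/2)𝔱_c]`. -/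
theorem stmt_8 (γ B S : ℝ) (hγ : 1 < γ) (hB : 0 < B) (hS : 0 < S)
    (t : ℝ → ℝ) (ht : ∀ ρ : ℝ, t ρ = 2 * ρ ^ 2 * (B - ρ ^ (γ - 1) * S))
    (rc rm tc : ℝ)
    (hrc : rc = (2 * B / ((γ + 1) * S)) ^ (1 / (γ - 1)))
    (hrm : rm = (B / S) ^ (1 / (γ - 1)))
    (htc : tc = (γ - 1) * (2 * B / (γ + 1)) ^ ((γ + 1) / (γ - 1)) * S ^ (-(2 / (γ - 1))))
    (r : ℝ → ℝ) (hmap : Set.MapsTo r (Set.Icc 0 tc) (Set.Icc rc rm))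
    (hinv : ∀ s ∈ Set.Icc 0 tc, t (r s) = s)
    (g : ℝ → ℝ) (hg : ∀ s, g s = 1 / r s) :
    (∀ ρ : ℝ, 0 < ρ →
        deriv t ρ = 2 / ρ * (t ρ - (γ - 1) * ρ ^ (γ + 1) * S)) ∧
      ∀ ε : ℝ, 0 < ε → ε < 1 →
        (∀ ρ ∈ Set.Icc rc rm, t ρ ≤ (1 - ε / 2) * tc → deriv t ρ ≤ -(ε * tc) / ρ) ∧
        ∀ s ∈ Set.Icc 0 ((1 - ε / 2) * tc),
          0 < derivWithin g (Set.Icc 0 tc) s ∧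
            derivWithin g (Set.Icc 0 tc) s ≤ g s / (ε * tc) := by
  have hγ1 : (0:ℝ) < γ - 1 := by linarith
  have hγ1' : γ - 1 ≠ 0 := ne_of_gt hγ1
  have hγp1 : (0:ℝ) < γ + 1 := by linarith
  have hX : (0:ℝ) < 2 * B / ((γ + 1) * S) := by positivity
  have hY : (0:ℝ) < B / S := by positivity
  have rc_pos : 0 < rc := by rw [hrc]; positivity
  have rm_pos : 0 < rm := by rw [hrm]; positivity
  -- rc ^ (γ - 1) = 2B/((γ+1)S)
  have hrc1 : rc ^ (γ - 1) = 2 * B / ((γ + 1) * S) := by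
    rw [hrc, ← Real.rpow_mul hX.le, one_div_mul_cancel hγ1', Real.rpow_one]
  have hrm1 : rm ^ (γ - 1) = B / S := by
    rw [hrm, ← Real.rpow_mul hY.le, one_div_mul_cancel hγ1', Real.rpow_one]
  have rc_lt_rm : rc < rm := by
    rw [hrc, hrm]
    apply Real.rpow_lt_rpow hX.le _ (by positivity)
    rw [div_lt_div_iff₀ (by positivity) hS]
    nlinarith [mul_pos (mul_pos hB hS) hγ1]
  -- split of rpow exponent: x ^ (γ+1) = x^(γ-1) * x^2 for x > 0
  have hsplit : ∀ x : ℝ, 0 < x → x ^ (γ + 1) = x ^ (γ - 1) * x ^ 2 := by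
    intro x hx
    have : γ + 1 = (γ - 1) + (2:ℝ) := by ring
    rw [this, Real.rpow_add hx]
    norm_num
  -- key identity: tc = (γ-1) * rc^(γ+1) * S
  have hkey : tc = (γ - 1) * rc ^ (γ + 1) * S := by
    have h1 : rc ^ (γ + 1) = (2 * B / ((γ + 1) * S)) ^ ((γ + 1) / (γ - 1)) := by
      rw [hrc, ← Real.rpow_mul hX.le, show 1 / (γ - 1) * (γ + 1) = (γ + 1) / (γ - 1) by ring]
    have h2 : (2 * B / ((γ + 1) * S)) = (2 * B / (γ + 1)) / S := (div_div _ _ _).symm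
    have h3 : (2 * B / ((γ + 1) * S)) ^ ((γ + 1) / (γ - 1))
        = (2 * B / (γ + 1)) ^ ((γ + 1) / (γ - 1)) / S ^ ((γ + 1) / (γ - 1)) := by
      rw [h2, Real.div_rpow (by positivity) hS.le]
    have h4 : S ^ (-(2 / (γ - 1))) = S / S ^ ((γ + 1) / (γ - 1)) := by
      have : -(2 / (γ - 1)) = 1 - (γ + 1) / (γ - 1) := by field_simp; ring
      rw [this, Real.rpow_sub hS, Real.rpow_one]
    rw [htc, h1, h3, h4]
    have hSp : (0:ℝ) < S ^ ((γ + 1) / (γ - 1)) := Real.rpow_pos_of_pos hS _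
    field_simp
  have tc_pos : 0 < tc := by
    rw [hkey]
    have := Real.rpow_pos_of_pos rc_pos (γ + 1)
    positivity
  -- derivative of t
  have hder : ∀ x : ℝ, 0 < x →
      HasDerivAt t (2 * x * (2 * B - (γ + 1) * x ^ (γ - 1) * S)) x := by
    intro x hx
    have h1 : HasDerivAt (fun y : ℝ => y ^ (γ - 1)) ((γ - 1) * x ^ (γ - 1 - 1)) x :=
      Real.hasDerivAt_rpow_const (Or.inl hx.ne')
    have hA : HasDerivAt (fun y : ℝ => 2 * y ^ 2) (2 * ((2:ℕ) * x ^ (2 - 1))) x :=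
      (hasDerivAt_pow 2 x).const_mul 2
    have hB' : HasDerivAt (fun y : ℝ => B - y ^ (γ - 1) * S)
        (-((γ - 1) * x ^ (γ - 1 - 1) * S)) x := (h1.mul_const S).const_sub B
    have hmul : HasDerivAt (fun y : ℝ => 2 * y ^ 2 * (B - y ^ (γ - 1) * S))
        (2 * (((2:ℕ):ℝ) * x ^ (2 - 1)) * (B - x ^ (γ - 1) * S) + 2 * x ^ 2 * -((γ - 1) * x ^ (γ - 1 - 1) * S)) x := hA.mul hB'
    have heq : (fun y : ℝ => 2 * y ^ 2 * (B - y ^ (γ - 1) * S)) = t := by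
      funext y; rw [ht]
    rw [heq] at hmul
    convert hmul using 1
    have hx1 : x ^ (γ - 1 - 1) = x ^ (γ - 1) / x := by
      rw [Real.rpow_sub hx, Real.rpow_one]
    rw [hx1]
    field_simp
    ring
  have hderiv_eq : ∀ x : ℝ, 0 < x →
      deriv t x = 2 * x * (2 * B - (γ + 1) * x ^ (γ - 1) * S) := fun x hx =>
    (hder x hx).deriv
  -- part (i)
  have part1 : ∀ ρ : ℝ, 0 < ρ →
      deriv t ρ = 2 / ρ * (t ρ - (γ - 1) * ρ ^ (γ + 1) * S) := by
    intro ρ hρ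
    rw [hderiv_eq ρ hρ, ht, hsplit ρ hρ]
    field_simp
    ring
  -- t is strictly antitone on [rc, rm]
  have htanti : StrictAntiOn t (Set.Icc rc rm) := by
    apply strictAntiOn_of_deriv_neg (convex_Icc rc rm)
    · intro x hx
      exact ((hder x (lt_of_lt_of_le rc_pos hx.1)).continuousAt).continuousWithinAt
    · intro x hx
      rw [interior_Icc] at hx
      have hx0 : 0 < x := lt_trans rc_pos hx.1
      rw [hderiv_eq x hx0]
      have hlt : rc ^ (γ - 1) < x ^ (γ - 1) :=
        Real.rpow_lt_rpow rc_pos.le hx.1 hγ1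
      rw [hrc1] at hlt
      have h2B : 2 * B < (γ + 1) * x ^ (γ - 1) * S := by
        have := (div_lt_iff₀ (by positivity : (0:ℝ) < (γ + 1) * S)).mp hlt
        nlinarith
      have : 2 * B - (γ + 1) * x ^ (γ - 1) * S < 0 := by linarith
      exact mul_neg_of_pos_of_neg (by positivity) this
  have htrm : t rm = 0 := by
    rw [ht, hrm1, div_mul_cancel₀ _ hS.ne']
    ring
  have htrc : t rc = tc := by
    rw [ht, hkey, hsplit rc rc_pos, hrc1]
    field_simp
    ring
  -- t maps [rc, rm] into [0, tc]
  have hmaps_t : ∀ x ∈ Set.Icc rc rm, t x ∈ Set.Icc 0 tc := by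
    intro x hx
    constructor
    · rw [← htrm]
      exact htanti.antitoneOn hx (Set.right_mem_Icc.2 rc_lt_rm.le) hx.2
    · rw [← htrc]
      exact htanti.antitoneOn (Set.left_mem_Icc.2 rc_lt_rm.le) hx hx.1
  -- r is surjective onto [rc, rm]
  have hsurj : ∀ ρ ∈ Set.Icc rc rm, ∃ s ∈ Set.Icc 0 tc, r s = ρ := by
    intro ρ hρ
    refine ⟨t ρ, hmaps_t ρ hρ, ?_⟩
    exact htanti.injOn (hmap (hmaps_t ρ hρ)) hρ (hinv (t ρ) (hmaps_t ρ hρ))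
  -- r is strictly antitone on [0, tc]
  have hranti : StrictAntiOn r (Set.Icc 0 tc) := by
    intro a ha b hb hab
    rcases lt_trichotomy (r b) (r a) with h | h | h
    · exact h
    · exfalso
      have : t (r a) = t (r b) := by rw [h]
      rw [hinv a ha, hinv b hb] at this
      exact absurd this (ne_of_lt hab)
    · exfalso
      have := htanti (hmap ha) (hmap hb) h
      rw [hinv a ha, hinv b hb] at this
      exact absurd hab (not_lt.2 this.le)
  -- endpoint values of r
  have hr_lt_rm : ∀ s ∈ Set.Icc 0 tc, 0 < s → r s < rm := by
    intro s hs hs0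
    rcases lt_or_eq_of_le (hmap hs).2 with h | h
    · exact h
    · exfalso
      have := hinv s hs
      rw [h, htrm] at this
      linarith
  have hrc_lt_r : ∀ s ∈ Set.Icc 0 tc, s < tc → rc < r s := by
    intro s hs hstc
    rcases lt_or_eq_of_le (hmap hs).1 with h | h
    · exact h
    · exfalso
      have := hinv s hs
      rw [← h, htrc] at this
      linarith
  -- continuity of r within Icc 0 tc
  have hrcont : ∀ s ∈ Set.Icc 0 tc, ContinuousWithinAt r (Set.Icc 0 tc) s := by
    intro s₀ hs₀
    set f : ℝ → ℝ := fun u => -(r u) with hf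
    have hfmono : StrictMonoOn f (Set.Icc 0 tc) := fun a ha b hb hab =>
      neg_lt_neg (hranti ha hb hab)
    have hright : s₀ < tc → ContinuousWithinAt f (Set.Ici s₀) s₀ := by
      intro hlt
      apply hfmono.continuousWithinAt_right_of_exists_between
        (Icc_mem_nhdsGE_of_mem ⟨hs₀.1, hlt⟩)
      intro b hb
      have hrcs : rc < r s₀ := hrc_lt_r s₀ hs₀ hlt
      have hfs : f s₀ = -(r s₀) := rfl
      set v : ℝ := min b (-rc) with hv
      have hv1 : f s₀ < v := lt_min hb (by rw [hfs]; linarith)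
      have hv2 : v ≤ b := min_le_left _ _
      have hnv : -v ∈ Set.Icc rc rm := by
        constructor
        · have : v ≤ -rc := min_le_right _ _
          linarith
        · have hb' : -b < r s₀ := by rw [hfs] at hb; linarith
          have hrs : r s₀ ≤ rm := (hmap hs₀).2
          have h1 : -b ≤ -v := by
            have : v ≤ b := min_le_left _ _
            linarith
          -- -v = max (-b) rc, so -v ≤ max of two things ≤ rm
          have h2 : -v = max (-b) rc := by
            rw [hv, ← max_neg_neg, neg_neg]
          rw [h2]
          exact max_le (by linarith) (le_of_lt rc_lt_rm)
      obtain ⟨c, hc, hrc'⟩ := hsurj (-v) hnv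
      refine ⟨c, hc, ?_⟩
      have hfc : f c = v := by simp [hf, hrc']
      rw [hfc]
      exact ⟨hv1, hv2⟩
    have hleft : 0 < s₀ → ContinuousWithinAt f (Set.Iic s₀) s₀ := by
      intro hlt
      apply hfmono.continuousWithinAt_left_of_exists_between
        (Icc_mem_nhdsLE_of_mem ⟨hlt, hs₀.2⟩)
      intro b hb
      have hrms : r s₀ < rm := hr_lt_rm s₀ hs₀ hlt
      have hfs : f s₀ = -(r s₀) := rfl
      set v : ℝ := max b (-rm) with hv
      have hv1 : v < f s₀ := max_lt hb (by rw [hfs]; linarith)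
      have hv2 : b ≤ v := le_max_left _ _
      have hnv : -v ∈ Set.Icc rc rm := by
        constructor
        · have hb' : r s₀ < -b := by rw [hfs] at hb; linarith
          have hrs : rc ≤ r s₀ := (hmap hs₀).1
          have h2 : -v = min (-b) rm := by
            rw [hv, ← min_neg_neg, neg_neg]
          rw [h2]
          exact le_min (by linarith) (le_of_lt rc_lt_rm)
        · have : -rm ≤ v := le_max_right _ _
          linarith
      obtain ⟨c, hc, hrc'⟩ := hsurj (-v) hnv
      refine ⟨c, hc, ?_⟩
      have hfc : f c = v := by simp [hf, hrc']
      rw [hfc]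
      exact ⟨hv2, hv1⟩
    have hfcont : ContinuousWithinAt f (Set.Icc 0 tc) s₀ := by
      rcases eq_or_lt_of_le hs₀.2 with heq | hlt
      · exact ((hleft (heq ▸ tc_pos)).mono (fun x hx => heq ▸ hx.2))
      · rcases eq_or_lt_of_le hs₀.1 with heq0 | hlt0
        · exact ((hright hlt).mono (fun x hx => heq0 ▸ hx.1))
        · exact (((hright hlt).union (hleft hlt0)).mono
            (fun x _ => (le_total s₀ x).imp id id))
    have : r = fun u => -(f u) := by funext u; simp [hf]
    rw [this]
    exact hfcont.neg
  refine ⟨part1, fun ε hε hε1 => ?_⟩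
  -- part (ii)
  have part2 : ∀ ρ ∈ Set.Icc rc rm, t ρ ≤ (1 - ε / 2) * tc →
      deriv t ρ ≤ -(ε * tc) / ρ := by
    intro ρ hρ htρ
    have hρ0 : 0 < ρ := lt_of_lt_of_le rc_pos hρ.1
    rw [part1 ρ hρ0]
    have hmono : rc ^ (γ + 1) ≤ ρ ^ (γ + 1) :=
      Real.rpow_le_rpow rc_pos.le hρ.1 (by linarith)
    have h1 : tc ≤ (γ - 1) * ρ ^ (γ + 1) * S := by
      rw [hkey]
      have := mul_le_mul_of_nonneg_right (mul_le_mul_of_nonneg_left hmono hγ1.le) hS.le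
      linarith
    have h2 : t ρ - (γ - 1) * ρ ^ (γ + 1) * S ≤ -(ε / 2 * tc) := by nlinarith
    have h3 : 2 / ρ * (t ρ - (γ - 1) * ρ ^ (γ + 1) * S) ≤ 2 / ρ * (-(ε / 2 * tc)) :=
      mul_le_mul_of_nonneg_left h2 (by positivity)
    have h4 : 2 / ρ * (-(ε / 2 * tc)) = -(ε * tc) / ρ := by
      field_simp
    linarith [h3, h4.ge, h4.le]
  refine ⟨part2, ?_⟩
  -- part (iii)
  intro s hs
  have hsub : (1 - ε / 2) * tc ≤ tc := by nlinarith
  have hs' : s ∈ Set.Icc 0 tc := ⟨hs.1, le_trans hs.2 hsub⟩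
  set ρ₀ : ℝ := r s with hρ₀
  have hρ₀mem : ρ₀ ∈ Set.Icc rc rm := hmap hs'
  have hρ₀pos : 0 < ρ₀ := lt_of_lt_of_le rc_pos hρ₀mem.1
  have htρ₀ : t ρ₀ = s := hinv s hs'
  set D : ℝ := deriv t ρ₀ with hD
  have hD_at : HasDerivAt t D ρ₀ := by
    have := hder ρ₀ hρ₀pos
    rwa [← hderiv_eq ρ₀ hρ₀pos] at this
  have hDle : D ≤ -(ε * tc) / ρ₀ := part2 ρ₀ hρ₀mem (by rw [htρ₀]; exact hs.2)
  have hDneg : D < 0 := lt_of_le_of_lt hDle (by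
    apply div_neg_of_neg_of_pos _ hρ₀pos
    nlinarith)
  have hDne : D ≠ 0 := ne_of_lt hDneg
  -- derivative of r within Icc 0 tc at s
  have hr_deriv : HasDerivWithinAt r D⁻¹ (Set.Icc 0 tc) s := by
    rw [hasDerivWithinAt_iff_tendsto_slope]
    have hslope_t : Filter.Tendsto (slope t ρ₀) (nhdsWithin ρ₀ {ρ₀}ᶜ) (nhds D) :=
      hasDerivAt_iff_tendsto_slope.mp hD_at
    have hne : ∀ u ∈ Set.Icc 0 tc \ {s}, r u ≠ ρ₀ := by
      intro u hu hru
      have : t (r u) = t ρ₀ := by rw [hru]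
      rw [hinv u hu.1, htρ₀] at this
      exact hu.2 this
    have htend_r : Filter.Tendsto r (nhdsWithin s (Set.Icc 0 tc \ {s}))
        (nhdsWithin ρ₀ {ρ₀}ᶜ) := by
      rw [tendsto_nhdsWithin_iff]
      constructor
      · exact (hrcont s hs').mono Set.diff_subset |>.tendsto
      · exact eventually_mem_nhdsWithin.mono (fun u hu => hne u hu)
    have hcomp : Filter.Tendsto (fun u => (slope t ρ₀ (r u))⁻¹)
        (nhdsWithin s (Set.Icc 0 tc \ {s})) (nhds D⁻¹) :=
      ((hslope_t.comp htend_r).inv₀ hDne)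
    apply hcomp.congr'
    filter_upwards [eventually_mem_nhdsWithin] with u hu
    have hru : r u ≠ ρ₀ := hne u hu
    have hus : u ≠ s := hu.2
    rw [slope_def_field, slope_def_field, hinv u hu.1, htρ₀, inv_div]
  -- derivative of g
  have hr_ne : r s ≠ 0 := ne_of_gt hρ₀pos
  have hg_deriv : HasDerivWithinAt g (-D⁻¹ / ρ₀ ^ 2) (Set.Icc 0 tc) s := by
    have h := hr_deriv.inv hr_ne
    have hgeq : g = fun u => (r u)⁻¹ := by
      funext u; rw [hg, one_div]
    rw [hgeq]
    exact h
  have hud : UniqueDiffWithinAt ℝ (Set.Icc 0 tc) s := uniqueDiffOn_Icc tc_pos s hs'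
  have hdw : derivWithin g (Set.Icc 0 tc) s = -D⁻¹ / ρ₀ ^ 2 :=
    hg_deriv.derivWithin hud
  rw [hdw]
  have hinvD : 0 < -D⁻¹ := by
    rw [neg_pos]
    exact inv_lt_zero.mpr hDneg
  constructor
  · positivity
  · -- -D⁻¹ / ρ₀² ≤ (1/ρ₀) / (ε tc)
    rw [hg]
    have hεtc : 0 < ε * tc := by positivity
    -- from D ≤ -(ε tc)/ρ₀ < 0 : -D ≥ ε tc / ρ₀, so -D⁻¹ = 1/(-D) ≤ ρ₀/(ε tc)
    have h1 : ε * tc / ρ₀ ≤ -D := by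
      have := neg_le_neg hDle
      rwa [neg_div, neg_neg] at this
    have h2 : -D⁻¹ = (-D)⁻¹ := by rw [inv_neg]
    have h3 : (-D)⁻¹ ≤ (ε * tc / ρ₀)⁻¹ := by
      apply inv_anti₀ (by positivity) h1
    rw [h2]
    calc (-D)⁻¹ / ρ₀ ^ 2 ≤ (ε * tc / ρ₀)⁻¹ / ρ₀ ^ 2 :=
          (div_le_div_iff_of_pos_right (by positivity)).mpr h3
      _ = 1 / r s / (ε * tc) := by
          rw [inv_div, ← hρ₀]
          field_simp
end

section
/- Let γ > 1 and B, S > 0 be real constants, 𝔱(ρ) := 2ρ²(B − ρ^{γ−1}S), ϱ_c := (2B/((γ+1)S))^{1/(γ−1)}, ϱ_m := (B/S)^{1/(γ−1)}, 𝔱_c := (γ−1)(2B/(γ+1))^{(γ+1)/(γ−1)} S^{−2/(γ−1)}, let ρ̂ be the inverse of 𝔱 on [ϱ_c, ϱ_m], and set g(t) := 1/ρ̂(t) for t ∈ [0, 𝔱_c). Then g'(t) > 0 for every t ∈ [0, 𝔱_c), and g'(t) → +∞ as t → 𝔱_c from below. -/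
open Filter Set

/-- Degeneracy at the sonic state (Lemma 2.5): with
`g = 1/ρ̂` where `ρ̂` inverts `𝔱(ρ) = 2ρ²(B − ρ^{γ−1}S)` on `(ϱ_c, ϱ_m]`,
one has `g'(t) > 0` on `[0, 𝔱_c)` and `g'(t) → +∞` as `t → 𝔱_c⁻`. -/
theorem stmt_9 (γ B S : ℝ) (hγ : 1 < γ) (hB : 0 < B) (hS : 0 < S)
    (t : ℝ → ℝ) (ht : ∀ ρ : ℝ, t ρ = 2 * ρ ^ 2 * (B - ρ ^ (γ - 1) * S))
    (rc rm tc : ℝ)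
    (hrc : rc = (2 * B / ((γ + 1) * S)) ^ (1 / (γ - 1)))
    (hrm : rm = (B / S) ^ (1 / (γ - 1)))
    (htc : tc = (γ - 1) * (2 * B / (γ + 1)) ^ ((γ + 1) / (γ - 1)) * S ^ (-(2 / (γ - 1))))
    (r : ℝ → ℝ)
    (hr : ∀ s ∈ Set.Ico 0 tc, r s ∈ Set.Ioc rc rm ∧ t (r s) = s)
    (g : ℝ → ℝ) (hg : ∀ s, g s = 1 / r s) :
    (∀ s ∈ Set.Ico 0 tc, 0 < derivWithin g (Set.Ico 0 tc) s) ∧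
      Filter.Tendsto (fun s => derivWithin g (Set.Ico 0 tc) s)
        (nhdsWithin tc (Set.Ico 0 tc)) Filter.atTop := by
  have hσ : (0:ℝ) < γ - 1 := by linarith
  have hγ1 : (0:ℝ) < γ + 1 := by linarith
  have hcpos : (0:ℝ) < 2 * B / ((γ + 1) * S) := by positivity
  have hmpos : (0:ℝ) < B / S := by positivity
  have hrc0 : 0 < rc := by rw [hrc]; positivity
  have hrm0 : 0 < rm := by rw [hrm]; positivity
  have hrcσ : rc ^ (γ - 1) = 2 * B / ((γ + 1) * S) := by
    rw [hrc, one_div, Real.rpow_inv_rpow hcpos.le hσ.ne']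
  have hrmσ : rm ^ (γ - 1) = B / S := by
    rw [hrm, one_div, Real.rpow_inv_rpow hmpos.le hσ.ne']
  have hrcrm : rc < rm := by
    rw [← Real.rpow_lt_rpow_iff hrc0.le hrm0.le hσ, hrcσ, hrmσ,
      div_lt_div_iff₀ (by positivity) hS]
    nlinarith [mul_pos hB hS]
  -- value of t at rc is tc
  have hrc2 : rc ^ 2 = (2 * B / ((γ + 1) * S)) ^ (2 / (γ - 1)) := by
    rw [hrc, ← Real.rpow_natCast ((2 * B / ((γ + 1) * S)) ^ (1 / (γ - 1))) 2,
      ← Real.rpow_mul hcpos.le]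
    congr 1
    ring
  have htcrc : t rc = tc := by
    have ha : (0:ℝ) < 2 * B / (γ + 1) := by positivity
    have e1 : (2 * B / ((γ + 1) * S)) ^ (2 / (γ - 1))
        = (2 * B / (γ + 1)) ^ (2 / (γ - 1)) / S ^ (2 / (γ - 1)) := by
      rw [show 2 * B / ((γ + 1) * S) = (2 * B / (γ + 1)) / S by field_simp,
        Real.div_rpow ha.le hS.le]
    have e2 : (2 * B / (γ + 1)) ^ ((γ + 1) / (γ - 1))
        = (2 * B / (γ + 1)) * (2 * B / (γ + 1)) ^ (2 / (γ - 1)) := by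
      rw [show (γ + 1) / (γ - 1) = 1 + 2 / (γ - 1) by field_simp; ring,
        Real.rpow_add ha, Real.rpow_one]
    have e3 : S ^ (-(2 / (γ - 1))) = (S ^ (2 / (γ - 1)))⁻¹ := Real.rpow_neg hS.le _
    have hSp : (0:ℝ) < S ^ (2 / (γ - 1)) := Real.rpow_pos_of_pos hS _
    rw [ht, hrcσ, hrc2, htc, e1, e2, e3]
    field_simp
    ring
  have htc0 : 0 < tc := by
    rw [← htcrc, ht, hrcσ]
    have h1 : 2 * B / ((γ + 1) * S) * S = 2 * B / (γ + 1) := by field_simp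
    have h2 : 0 < B - 2 * B / (γ + 1) := by
      rw [sub_pos, div_lt_iff₀ hγ1]; nlinarith
    rw [h1]
    positivity
  -- derivative of t
  have hderiv : ∀ ρ : ℝ, 0 < ρ →
      HasDerivAt t (4 * ρ * B - 2 * (γ + 1) * ρ ^ γ * S) ρ := by
    intro ρ hρ
    have h1 : HasDerivAt (fun x : ℝ => x ^ (γ - 1)) ((γ - 1) * ρ ^ (γ - 1 - 1)) ρ :=
      Real.hasDerivAt_rpow_const (Or.inl hρ.ne')
    have h2 : HasDerivAt (fun x : ℝ => B - x ^ (γ - 1) * S)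
        (-((γ - 1) * ρ ^ (γ - 1 - 1) * S)) ρ := (h1.mul_const S).const_sub B
    have h3 : HasDerivAt (fun x : ℝ => 2 * x ^ 2) (2 * ((2:ℕ) * ρ ^ (2 - 1))) ρ :=
      (hasDerivAt_pow 2 ρ).const_mul 2
    have h4 := h3.mul h2
    have e1 : ρ ^ (γ - 1) = ρ ^ γ / ρ := by
      rw [show γ - 1 = γ - (1:ℝ) from rfl, Real.rpow_sub hρ, Real.rpow_one]
    have e2 : ρ ^ (γ - 1 - 1) = ρ ^ γ / ρ ^ 2 := by
      rw [show γ - 1 - 1 = γ - (2:ℝ) by ring, Real.rpow_sub hρ,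
        ← Real.rpow_natCast ρ 2]
      norm_num
    have h5 : HasDerivAt (fun x : ℝ => 2 * x ^ 2 * (B - x ^ (γ - 1) * S))
        (4 * ρ * B - 2 * (γ + 1) * ρ ^ γ * S) ρ := by
      refine h4.congr_deriv ?_
      symm
      rw [e1, e2]
      have hρ2 : ρ ^ 2 ≠ 0 := by positivity
      field_simp
      ring
    exact h5.congr_of_eventuallyEq (Eventually.of_forall fun x => ht x)
  -- positivity of -t' on (rc, ∞)
  have hDpos : ∀ ρ : ℝ, rc < ρ → 0 < 2 * (γ + 1) * ρ ^ γ * S - 4 * ρ * B := by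
    intro ρ hρrc
    have hρ : 0 < ρ := hrc0.trans hρrc
    have h1 : rc ^ (γ - 1) < ρ ^ (γ - 1) := Real.rpow_lt_rpow hrc0.le hρrc hσ
    rw [hrcσ, div_lt_iff₀ (by positivity)] at h1
    have hγρ : ρ ^ ((1:ℝ) + (γ - 1)) = ρ ^ (1:ℝ) * ρ ^ (γ - 1) := Real.rpow_add hρ 1 (γ - 1)
    rw [Real.rpow_one, show (1:ℝ) + (γ - 1) = γ by ring] at hγρ
    rw [hγρ]
    nlinarith [Real.rpow_pos_of_pos hρ (γ - 1)]
  -- strict antitonicity of t on [rc, rm]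
  have hanti : StrictAntiOn t (Icc rc rm) := by
    apply strictAntiOn_of_deriv_neg (convex_Icc _ _)
    · intro x hx
      exact ((hderiv x (hrc0.trans_le hx.1)).continuousAt).continuousWithinAt
    · intro x hx
      rw [interior_Icc] at hx
      rw [(hderiv x (hrc0.trans hx.1)).deriv]
      linarith [hDpos x hx.1]
  set U := Set.Ico (0:ℝ) tc with hU
  -- continuity of r within U at points where the inverse relation is known
  have hcont_r : ∀ (s₀ ρ₀ : ℝ), ρ₀ ∈ Icc rc rm → t ρ₀ = s₀ →
      Tendsto r (nhdsWithin s₀ U) (nhds ρ₀) := by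
    intro s₀ ρ₀ hρ₀ hts
    rw [tendsto_order]
    constructor
    · intro a ha
      rcases eq_or_lt_of_le hρ₀.1 with hec | hlt
      · filter_upwards [self_mem_nhdsWithin] with y hy
        exact lt_trans (hec ▸ ha) (hr y hy).1.1
      · set ρm : ℝ := max ((rc + ρ₀) / 2) ((a + ρ₀) / 2) with hρm
        have h1 : rc < ρm := lt_max_of_lt_left (by linarith)
        have h2 : ρm < ρ₀ := max_lt (by linarith) (by linarith)
        have h3 : a < ρm := lt_of_lt_of_le (by linarith) (le_max_right _ _)
        have hsm : s₀ < t ρm := by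
          have := hanti ⟨h1.le, h2.le.trans hρ₀.2⟩ hρ₀ h2
          rwa [hts] at this
        filter_upwards [self_mem_nhdsWithin,
          mem_nhdsWithin_of_mem_nhds (Iio_mem_nhds hsm)] with y hyU hylt
        by_contra hcon
        push_neg at hcon
        have hy2 : r y ≤ ρm := hcon.trans h3.le
        have : t ρm ≤ t (r y) := by
          rcases eq_or_lt_of_le hy2 with he | hl
          · rw [he]
          · exact (hanti ⟨(hr y hyU).1.1.le, ((hr y hyU).1.2)⟩
              ⟨h1.le, h2.le.trans hρ₀.2⟩ hl).le
        rw [(hr y hyU).2] at this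
        exact absurd (lt_of_le_of_lt this hylt) (lt_irrefl _)
    · intro b hb
      rcases eq_or_lt_of_le hρ₀.2 with hec | hlt
      · filter_upwards [self_mem_nhdsWithin] with y hy
        exact lt_of_le_of_lt ((hr y hy).1.2) (hec ▸ hb)
      · set ρp : ℝ := min ((ρ₀ + b) / 2) rm with hρp
        have h1 : ρ₀ < ρp := lt_min (by linarith) hlt
        have h2 : ρp ≤ rm := min_le_right _ _
        have h3 : ρp < b := lt_of_le_of_lt (min_le_left _ _) (by linarith)
        have hsp : t ρp < s₀ := by
          have := hanti hρ₀ ⟨hρ₀.1.trans h1.le, h2⟩ h1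
          rwa [hts] at this
        filter_upwards [self_mem_nhdsWithin,
          mem_nhdsWithin_of_mem_nhds (Ioi_mem_nhds hsp)] with y hyU hygt
        by_contra hcon
        push_neg at hcon
        have hy2 : ρp ≤ r y := h3.le.trans hcon
        have : t (r y) ≤ t ρp := by
          rcases eq_or_lt_of_le hy2 with he | hl
          · rw [he]
          · exact (hanti ⟨hρ₀.1.trans h1.le, h2⟩
              ⟨(hr y hyU).1.1.le, ((hr y hyU).1.2)⟩ hl).le
        rw [(hr y hyU).2] at this
        exact absurd this (not_le.mpr (Set.mem_Ioi.mp hygt))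
  -- derivative of g within U
  have hg' : ∀ s ∈ U, HasDerivWithinAt g
      (-((4 * r s * B - 2 * (γ + 1) * (r s) ^ γ * S)⁻¹) / (r s) ^ 2) U s := by
    intro s hs
    obtain ⟨hmem, hts⟩ := hr s hs
    have hρpos : 0 < r s := hrc0.trans hmem.1
    have hEneg : 4 * r s * B - 2 * (γ + 1) * (r s) ^ γ * S < 0 := by
      linarith [hDpos (r s) hmem.1]
    have hr' : HasDerivWithinAt r ((4 * r s * B - 2 * (γ + 1) * (r s) ^ γ * S)⁻¹) U s := by
      rw [hasDerivWithinAt_iff_tendsto_slope]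
      have hslope : Tendsto (slope t (r s)) (nhdsWithin (r s) {r s}ᶜ)
          (nhds (4 * r s * B - 2 * (γ + 1) * (r s) ^ γ * S)) :=
        hasDerivAt_iff_tendsto_slope.1 (hderiv (r s) hρpos)
      have htr : Tendsto r (nhdsWithin s (U \ {s})) (nhdsWithin (r s) {r s}ᶜ) := by
        apply tendsto_nhdsWithin_of_tendsto_nhds_of_eventually_within
        · exact (hcont_r s (r s) ⟨hmem.1.le, hmem.2⟩ hts).mono_left
            (nhdsWithin_mono s diff_subset)
        · filter_upwards [self_mem_nhdsWithin] with y hy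
          intro hcon
          apply hy.2
          have : t (r y) = t (r s) := by rw [hcon]
          rw [(hr y hy.1).2, hts] at this
          exact this
      have hcomp := hslope.comp htr
      have hinv := hcomp.inv₀ hEneg.ne
      apply hinv.congr'
      filter_upwards [self_mem_nhdsWithin] with y hy
      have hy1 := (hr y hy.1).2
      have hyne : r y ≠ r s := by
        intro hcon
        apply hy.2
        have : t (r y) = t (r s) := by rw [hcon]
        rwa [hy1, hts] at this
      show (slope t (r s) (r y))⁻¹ = slope r s y
      rw [slope_def_field, slope_def_field, hy1, hts, inv_div]
    have hgr : g = fun y => (r y)⁻¹ := funext fun y => by rw [hg y, one_div]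
    rw [hgr]
    exact hr'.inv hρpos.ne'
  have hUdiff : UniqueDiffOn ℝ U := uniqueDiffOn_Ico 0 tc
  have hform : ∀ s ∈ U, derivWithin g U s
      = ((2 * (γ + 1) * (r s) ^ γ * S - 4 * r s * B) * (r s) ^ 2)⁻¹ := by
    intro s hs
    rw [(hg' s hs).derivWithin (hUdiff s hs)]
    rw [mul_inv, ← neg_sub (4 * r s * B), inv_neg, div_eq_mul_inv]
  constructor
  · intro s hs
    rw [hform s hs]
    have hmem := (hr s hs).1
    have hρpos : 0 < r s := hrc0.trans hmem.1
    have := hDpos (r s) hmem.1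
    positivity
  · -- tendsto part
    have htend : Tendsto r (nhdsWithin tc U) (nhds rc) :=
      hcont_r tc rc ⟨le_refl _, hrcrm.le⟩ htcrc
    have c1 : ContinuousAt (fun ρ : ℝ => ρ ^ γ) rc :=
      Real.continuousAt_rpow_const rc γ (Or.inl hrc0.ne')
    have hφ : Tendsto (fun s => (2 * (γ + 1) * (r s) ^ γ * S - 4 * r s * B) * (r s) ^ 2)
        (nhdsWithin tc U)
        (nhds ((2 * (γ + 1) * rc ^ γ * S - 4 * rc * B) * rc ^ 2)) := by
      exact (((tendsto_const_nhds.mul (c1.tendsto.comp htend)).mul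
        tendsto_const_nhds).sub ((tendsto_const_nhds.mul htend).mul
        tendsto_const_nhds)).mul (htend.pow 2)
    have hval : (2 * (γ + 1) * rc ^ γ * S - 4 * rc * B) * rc ^ 2 = 0 := by
      have hrcγ : rc ^ ((1:ℝ) + (γ - 1)) = rc ^ (1:ℝ) * rc ^ (γ - 1) :=
        Real.rpow_add hrc0 1 (γ - 1)
      rw [Real.rpow_one, show (1:ℝ) + (γ - 1) = γ by ring, hrcσ] at hrcγ
      rw [hrcγ]
      field_simp
      ring
    rw [hval] at hφ
    have hφ' : Tendsto (fun s => (2 * (γ + 1) * (r s) ^ γ * S - 4 * r s * B) * (r s) ^ 2)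
        (nhdsWithin tc U) (nhdsWithin 0 (Ioi 0)) := by
      apply tendsto_nhdsWithin_of_tendsto_nhds_of_eventually_within _ hφ
      filter_upwards [self_mem_nhdsWithin] with y hy
      have hmem := (hr y hy).1
      have hρpos : 0 < r y := hrc0.trans hmem.1
      have := hDpos (r y) hmem.1
      exact mul_pos this (by positivity)
    have hfinal := tendsto_inv_nhdsGT_zero.comp hφ'
    apply hfinal.congr'
    filter_upwards [self_mem_nhdsWithin] with s hs
    exact (hform s hs).symm
end

section
/- Let ε ∈ (0, 1/4), T > 0 and g* > 0. Let g : [0, ∞) → ℝ be continuously differentiable with 0 < g(t) ≤ g* for all t ≥ 0, and with 0 ≤ g'(t) ≤ g(t)/(εT) for all t ≤ (1 − ε/2)T. Let ϖ : ℝ → [0, 1] be continuously differentiable and nonincreasing, with ϖ(s) = 0 for s ≥ 1 − ε/2 and |ϖ'(s)| ≤ 8/ε for all s. Define g_ε(t) := g(t) ϖ(t/T) + (1 − ϖ(t/T)) g*. Then for all t ≥ 0: 0 ≤ g_ε'(t) ≤ 9g*/(εT); g_ε'(t) = 0 whenever t > (1 − ε/2)T; and 0 ≤ t g_ε'(t)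 ≤ 9g*/ε. -/
/-- Subsonic truncation (Lemma 2.6, (2.50)–(2.51)): with
`g_ε(t) = g(t)ϖ(t/T) + (1 − ϖ(t/T))g*`, for all `t ≥ 0` one has
`0 ≤ g_ε'(t) ≤ 9g*/(εT)`, `g_ε'(t) = 0` whenever `t > (1 − ε/2)T`, and
`0 ≤ t·g_ε'(t) ≤ 9g*/ε`. -/
theorem stmt_14 (ε T gs : ℝ) (hε : 0 < ε) (hε' : ε < 1 / 4)
    (hT : 0 < T) (hgs : 0 < gs)
    (g g' ϖ ϖ' : ℝ → ℝ)
    (hgd : ∀ t : ℝ, 0 ≤ t → HasDerivAt g (g' t) t)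
    (hg'c : ContinuousOn g' (Set.Ici 0))
    (hgpos : ∀ t : ℝ, 0 ≤ t → 0 < g t) (hgub : ∀ t : ℝ, 0 ≤ t → g t ≤ gs)
    (hg'b : ∀ t : ℝ, 0 ≤ t → t ≤ (1 - ε / 2) * T → 0 ≤ g' t ∧ g' t ≤ g t / (ε * T))
    (hϖd : ∀ s : ℝ, HasDerivAt ϖ (ϖ' s) s) (hϖ'c : Continuous ϖ')
    (hϖ01 : ∀ s : ℝ, ϖ s ∈ Set.Icc (0:ℝ) 1) (hϖanti : Antitone ϖ)
    (hϖ0 : ∀ s : ℝ, 1 - ε / 2 ≤ s → ϖ s = 0)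
    (hϖ'b : ∀ s : ℝ, |ϖ' s| ≤ 8 / ε)
    (gε : ℝ → ℝ)
    (hgε : ∀ t : ℝ, gε t = g t * ϖ (t / T) + (1 - ϖ (t / T)) * gs) :
    ∀ t : ℝ, 0 ≤ t →
      0 ≤ deriv gε t ∧ deriv gε t ≤ 9 * gs / (ε * T) ∧
      ((1 - ε / 2) * T < t → deriv gε t = 0) ∧
      0 ≤ t * deriv gε t ∧ t * deriv gε t ≤ 9 * gs / ε := by
  have hϖ'le : ∀ s : ℝ, ϖ' s ≤ 0 := by
    intro s
    have h := hasDerivAt_iff_tendsto_slope.mp (hϖd s)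
    refine le_of_tendsto h ?_
    filter_upwards [self_mem_nhdsWithin] with y hy
    rcases lt_or_gt_of_ne (hy : y ≠ s) with h1 | h1
    · rw [slope_def_field]
      apply div_nonpos_of_nonneg_of_nonpos
      · have := hϖanti h1.le; linarith
      · linarith
    · rw [slope_def_field]
      apply div_nonpos_of_nonpos_of_nonneg
      · have := hϖanti h1.le; linarith
      · linarith
  intro t ht
  rcases le_or_gt t ((1 - ε / 2) * T) with hcase | hcase
  · -- compute the derivative
    have hgεfun : gε = fun u => g u * ϖ (u / T) + (1 - ϖ (u / T)) * gs := funext hgε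
    have hϖder : HasDerivAt (fun u : ℝ => ϖ (u / T)) (ϖ' (t / T) * (1 / T)) t :=
      (hϖd (t / T)).comp t ((hasDerivAt_id t).div_const T)
    have h1 : HasDerivAt (fun u : ℝ => g u * ϖ (u / T))
        (g' t * ϖ (t / T) + g t * (ϖ' (t / T) * (1 / T))) t :=
      (hgd t ht).mul hϖder
    have h2 : HasDerivAt (fun u : ℝ => (1 - ϖ (u / T)) * gs)
        (-(ϖ' (t / T) * (1 / T)) * gs) t :=
      (hϖder.const_sub 1).mul_const gs
    have hD : HasDerivAt gε
        (g' t * ϖ (t / T) + g t * (ϖ' (t / T) * (1 / T)) + -(ϖ' (t / T) * (1 / T)) * gs) t := by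
      rw [hgεfun]; exact h1.add h2
    have hderiv : deriv gε t
        = g' t * ϖ (t / T) + (g t - gs) * ϖ' (t / T) / T := by
      rw [hD.deriv]; field_simp; ring
    set a := ϖ (t / T) with ha
    set b := ϖ' (t / T) with hb
    obtain ⟨ha0, ha1⟩ := hϖ01 (t / T)
    have hb0 : b ≤ 0 := hϖ'le _
    have hbabs : -b ≤ 8 / ε := by have := hϖ'b (t / T); rw [abs_le] at this; linarith [this.1]
    obtain ⟨hg'0, hg'1⟩ := hg'b t ht hcase
    have hg0 : 0 < g t := hgpos t ht
    have hg1 : g t ≤ gs := hgub t ht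
    have hεT : 0 < ε * T := mul_pos hε hT
    have hDnn : 0 ≤ deriv gε t := by
      rw [hderiv]
      have h3 : 0 ≤ (g t - gs) * b := by nlinarith
      have h3' : 0 ≤ (g t - gs) * b / T := div_nonneg h3 hT.le
      have h4 : 0 ≤ g' t * a := mul_nonneg hg'0 ha0
      linarith
    have hDub : deriv gε t ≤ 9 * gs / (ε * T) := by
      rw [hderiv]
      have h3 : g' t * a ≤ gs / (ε * T) := by
        calc g' t * a ≤ g' t * 1 := by nlinarith
        _ ≤ g t / (ε * T) := by linarith
        _ ≤ gs / (ε * T) := by gcongr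
      have hbe : -b * ε ≤ 8 := by
        rw [le_div_iff₀ hε] at hbabs; linarith
      have h4 : (g t - gs) * b / T ≤ 8 * gs / (ε * T) := by
        rw [div_le_div_iff₀ hT hεT]
        nlinarith [mul_le_mul_of_nonneg_left hbe (mul_nonneg (by linarith : (0:ℝ) ≤ gs - g t) hT.le),
          mul_pos hg0 hT, mul_nonneg hg0.le hT.le]
      have h9 : (9 : ℝ) * gs / (ε * T) = gs / (ε * T) + 8 * gs / (ε * T) := by ring
      linarith
    have htT : t ≤ T := by nlinarith
    refine ⟨hDnn, hDub, fun hlt => absurd hlt (not_lt.mpr hcase), mul_nonneg ht hDnn, ?_⟩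
    calc t * deriv gε t ≤ T * deriv gε t := mul_le_mul_of_nonneg_right htT hDnn
      _ ≤ T * (9 * gs / (ε * T)) := mul_le_mul_of_nonneg_left hDub hT.le
      _ = 9 * gs / ε := by field_simp
  · -- constant region
    have hev : gε =ᶠ[nhds t] fun _ => gs := by
      filter_upwards [Ioi_mem_nhds hcase] with u hu
      have huT : 1 - ε / 2 ≤ u / T := by
        rw [le_div_iff₀ hT]; exact le_of_lt hu
      rw [hgε u, hϖ0 _ huT]; ring
    have h0 : deriv gε t = 0 := by
      rw [hev.deriv_eq, deriv_const]
    rw [h0]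
    have hεT : 0 < ε * T := mul_pos hε hT
    refine ⟨le_refl 0, by positivity, fun _ => rfl, by simp, by rw [mul_zero]; positivity⟩
end

section
/- Let Q > 0, b > 0 and κ ≥ 0. Let 𝒢 : ℝ² × ℝ → ℝ be such that: for each z ∈ ℝ, p ↦ 𝒢(p, z) is twice continuously differentiable with ∇_p 𝒢(0, z) = 0 and ξ · (D_p² 𝒢(p, z)) ξ ≥ b|ξ|² for all p, ξ ∈ ℝ²; for each p ∈ ℝ², z ↦ 𝒢(p, z) is differentiable with |∂_z 𝒢(p, z)| ≤ κ for all z, ∂_z 𝒢(p, z) = 0 for all z ≤ 0, and ∂_z 𝒢(p, z) ≥ 0 for all z ≥ Q; and 𝒢(0, Q) = 0. Then for all (p, z) ∈ ℝ² × ℝ: 𝒢(p, z) ≥ (b/2)|p|² − κ · min{Q, max(Q − z, 0)}. -/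
/-- Abstract coercivity estimate (3.19): if `p ↦ 𝒢(p,z)` is
`C²` with vanishing gradient at `p = 0` and Hessian `≥ b`, and `z ↦ 𝒢(p,z)` is
differentiable with `|∂_z𝒢| ≤ κ`, `∂_z𝒢 = 0` for `z ≤ 0`, `∂_z𝒢 ≥ 0` for
`z ≥ Q`, and `𝒢(0,Q) = 0`, then
`𝒢(p,z) ≥ (b/2)|p|² − κ·min{Q, max(Q − z, 0)}`. -/
theorem stmt_15 (Q b κ : ℝ) (hQ : 0 < Q) (hb : 0 < b) (hκ : 0 ≤ κ)
    (G Gz : ℝ × ℝ → ℝ → ℝ)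
    (hC2 : ∀ z : ℝ, ContDiff ℝ 2 (fun p => G p z))
    (hgrad0 : ∀ z : ℝ, fderiv ℝ (fun p => G p z) 0 = 0)
    (hconv : ∀ z : ℝ, ∀ p ξ : ℝ × ℝ,
      b * (ξ.1 ^ 2 + ξ.2 ^ 2)
        ≤ fderiv ℝ (fun q => fderiv ℝ (fun r => G r z) q ξ) p ξ)
    (hzd : ∀ (p : ℝ × ℝ) (z : ℝ), HasDerivAt (fun w => G p w) (Gz p z) z)
    (hzb : ∀ (p : ℝ × ℝ) (z : ℝ), |Gz p z| ≤ κ)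
    (hz0 : ∀ (p : ℝ × ℝ) (z : ℝ), z ≤ 0 → Gz p z = 0)
    (hzQ : ∀ (p : ℝ × ℝ) (z : ℝ), Q ≤ z → 0 ≤ Gz p z)
    (hGQ : G 0 Q = 0) :
    ∀ (p : ℝ × ℝ) (z : ℝ),
      b / 2 * (p.1 ^ 2 + p.2 ^ 2) - κ * min Q (max (Q - z) 0) ≤ G p z := by
  intro p z
  -- the z-direction function at p = 0
  have hf : ∀ x : ℝ, HasDerivAt (fun w => G 0 w) (Gz 0 x) x := fun x => hzd 0 x
  have hfd : Differentiable ℝ (fun w => G 0 w) := fun x => (hf x).differentiableAt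
  have hlip : ∀ a c : ℝ, |G 0 c - G 0 a| ≤ κ * |c - a| := by
    intro a c
    have := Convex.norm_image_sub_le_of_norm_hasDerivWithin_le
      (f := fun w => G 0 w) (f' := Gz 0) (C := κ) (s := Set.univ)
      (fun x _ => (hf x).hasDerivWithinAt)
      (fun x _ => by simpa [Real.norm_eq_abs] using hzb 0 x)
      convex_univ (Set.mem_univ a) (Set.mem_univ c)
    simpa [Real.norm_eq_abs] using this
  have hzpart : -(κ * min Q (max (Q - z) 0)) ≤ G 0 z := by
    rcases le_or_gt Q z with hQz | hQz
    · have hmin : min Q (max (Q - z) 0) = 0 := by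
        have h1 : max (Q - z) 0 = 0 := max_eq_right (by linarith)
        rw [h1]; exact min_eq_right hQ.le
      rw [hmin]
      have hmono : MonotoneOn (fun w => G 0 w) (Set.Ici Q) := by
        apply monotoneOn_of_deriv_nonneg (convex_Ici Q)
          hfd.continuous.continuousOn (hfd.differentiableOn)
        intro x hx
        rw [interior_Ici] at hx
        rw [(hf x).deriv]
        exact hzQ 0 x (le_of_lt hx)
      have := hmono (Set.self_mem_Ici) hQz hQz
      simp only [hGQ] at this
      simpa using this
    · rcases le_or_gt 0 z with hz0' | hz0'
      · have hmin : min Q (max (Q - z) 0) = Q - z := by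
          have h1 : max (Q - z) 0 = Q - z := max_eq_left (by linarith)
          rw [h1]; exact min_eq_right (by linarith)
        rw [hmin]
        have := hlip z Q
        rw [hGQ] at this
        rw [abs_of_nonneg (by linarith : (0:ℝ) ≤ Q - z)] at this
        have habs := abs_le.mp this
        linarith [habs.2]
      · have hmin : min Q (max (Q - z) 0) = Q := by
          have h1 : max (Q - z) 0 = Q - z := max_eq_left (by linarith)
          rw [h1]; exact min_eq_left (by linarith)
        rw [hmin]
        -- G 0 z = G 0 0 since derivative vanishes on Iic 0
        have hconst : G 0 z = G 0 0 := by
          have := Convex.norm_image_sub_le_of_norm_hasDerivWithin_le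
            (f := fun w => G 0 w) (f' := Gz 0) (C := 0) (s := Set.Iic 0)
            (fun x hx => (hf x).hasDerivWithinAt)
            (fun x hx => by simp [hz0 0 x (Set.mem_Iic.mp hx)])
            (convex_Iic 0) (Set.self_mem_Iic) (Set.mem_Iic.mpr hz0'.le)
          simp only [zero_mul, norm_le_zero_iff, sub_eq_zero] at this
          exact this
        rw [hconst]
        have h2 := hlip 0 Q
        rw [hGQ] at h2
        rw [zero_sub, abs_neg, sub_zero, abs_of_nonneg hQ.le] at h2
        have habs := abs_le.mp h2
        linarith [habs.2]
  -- the p-direction: strong convexity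
  have hFd : Differentiable ℝ (fun r => G r z) := (hC2 z).differentiable (by norm_num)
  have hF1 : ContDiff ℝ 1 (fderiv ℝ (fun r => G r z)) :=
    (hC2 z).fderiv_right (le_refl _)
  have hgd : Differentiable ℝ (fun q => fderiv ℝ (fun r => G r z) q p) :=
    (hF1.differentiable one_ne_zero).clm_apply (differentiable_const p)
  have hline : ∀ t : ℝ, HasDerivAt (fun s : ℝ => s • p) p t := by
    intro t
    simpa using (hasDerivAt_id t).smul_const p
  have hphi : ∀ t : ℝ, HasDerivAt (fun s : ℝ => G (s • p) z)
      (fderiv ℝ (fun r => G r z) (t • p) p) t := by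
    intro t
    exact ((hFd (t • p)).hasFDerivAt.comp_hasDerivAt t (hline t))
  have hw : ∀ t : ℝ, HasDerivAt (fun s : ℝ => fderiv ℝ (fun r => G r z) (s • p) p)
      (fderiv ℝ (fun q => fderiv ℝ (fun r => G r z) q p) (t • p) p) t := by
    intro t
    exact ((hgd (t • p)).hasFDerivAt.comp_hasDerivAt t (hline t))
  set B : ℝ := b * (p.1 ^ 2 + p.2 ^ 2) with hB
  have hpsi : ∀ t : ℝ, HasDerivAt
      (fun s : ℝ => fderiv ℝ (fun r => G r z) (s • p) p - B * s)
      (fderiv ℝ (fun q => fderiv ℝ (fun r => G r z) q p) (t • p) p - B) t := by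
    intro t
    exact ((hw t).sub ((hasDerivAt_id t).const_mul B)).congr_deriv (by ring)
  have hpsi_mono : Monotone (fun s : ℝ => fderiv ℝ (fun r => G r z) (s • p) p - B * s) := by
    apply monotone_of_deriv_nonneg (fun t => (hpsi t).differentiableAt)
    intro t
    rw [(hpsi t).deriv]
    have := hconv z (t • p) p
    simp only [sub_nonneg]
    exact this
  have hpsi_nonneg : ∀ t : ℝ, 0 ≤ t → B * t ≤ fderiv ℝ (fun r => G r z) (t • p) p := by
    intro t ht
    have h := hpsi_mono ht
    simp only [zero_smul, mul_zero, sub_zero, hgrad0 z,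
      ContinuousLinearMap.zero_apply] at h
    linarith
  have hchi : ∀ t : ℝ, HasDerivAt (fun s : ℝ => G (s • p) z - B / 2 * s ^ 2)
      (fderiv ℝ (fun r => G r z) (t • p) p - B * t) t := by
    intro t
    have h2 : HasDerivAt (fun s : ℝ => B / 2 * s ^ 2) (B * t) t := by
      have := (hasDerivAt_pow 2 t).const_mul (B / 2)
      exact this.congr_deriv (by norm_num; ring)
    exact (hphi t).sub h2
  have hchi_mono : MonotoneOn (fun s : ℝ => G (s • p) z - B / 2 * s ^ 2) (Set.Icc 0 1) := by
    apply monotoneOn_of_deriv_nonneg (convex_Icc 0 1)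
    · exact (continuous_iff_continuousAt.mpr
        (fun t => (hchi t).differentiableAt.continuousAt)).continuousOn
    · exact fun t _ => (hchi t).differentiableAt.differentiableWithinAt
    · intro t ht
      rw [interior_Icc] at ht
      rw [(hchi t).deriv]
      have := hpsi_nonneg t ht.1.le
      linarith
  have hkey := hchi_mono (Set.mem_Icc.mpr ⟨le_refl 0, zero_le_one⟩)
    (Set.mem_Icc.mpr ⟨zero_le_one, le_refl 1⟩) zero_le_one
  simp only [zero_smul, one_smul, one_pow, mul_one] at hkey
  -- hkey : G 0 z - B/2 * 0^2 ≤ G p z - B/2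
  have hkey' : G 0 z ≤ G p z - B / 2 := by
    simpa using hkey
  rw [hB] at hkey'
  linarith [hzpart, hkey']
end
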